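/- arXiv:2307.13242 — 4 statements merged into one kernel-verified Lean document; each statement's English description precedes it below -/
import Mathlib

section
/- Every finite generalized ordinal potential game possesses a pure-strategy Nash equilibrium: if Φ : A → ℝ satisfies that u_i(a_i, a_{-i}) - u_i(a'_i, a_{-i}) > 0 implies Φ(a_i, a_{-i}) - Φ(a'_i, a_{-i}) > 0 for all players i and all unilateral deviations, then any maximizer of Φ over the finite profile set A is a pure-strategy Nash equilibrium. -/
/-- Every finite generalized ordinal potential game possesses a pure-strategy
Nash equilibrium: any maximizer of the potential Φ is a PSNE. -/
theorem stmt_1 {ι : Type*} [Fintype ι] [Nonempty ι] [DecidableEq ι]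
    (A : ι → Type*) [∀ i, Fintype (A i)] [∀ i, Nonempty (A i)]
    (u : ι → (∀ i, A i) → ℝ) (Φ : (∀ i, A i) → ℝ)
    (hpot : ∀ (i : ι) (a : ∀ j, A j) (ai' : A i),
      u i a > u i (Function.update a i ai') → Φ a > Φ (Function.update a i ai'))
    (astar : ∀ i, A i) (hmax : ∀ a, Φ a ≤ Φ astar) :
    ∀ (i : ι) (ai : A i), u i (Function.update astar i ai) ≤ u i astar := by
  intro i ai
  by_contra h
  push_neg at h
  have key : Function.update (Function.update astar i ai) i (astar i) = astar := by
    funext j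
    by_cases hj : j = i
    · subst hj; simp
    · simp [Function.update_of_ne hj]
  have := hpot i (Function.update astar i ai) (astar i) (by rw [key]; exact h)
  rw [key] at this
  exact absurd (hmax _) (not_le.mpr this)
end

section
/- In a socially concave game (with convex compact action sets in ℝ^d), if π is a coarse correlated equilibrium, then the expected profile ā = E_π[a] is a pure Nash equilibrium. Specifically: (i) each player's expected utility under π equals its utility at ā, i.e., E_π[u_i(a)] = u_i(ā), and (ii) u_i(ā) ≥ u_i(a'_i, ā_{-i}) for every player i and every action a'_i. -/
open MeasureTheory

/-- In a socially concave game with convex compact action sets in ℝ^d, the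
expected profile of a coarse correlated equilibrium is a pure Nash
equilibrium: each player's expected utility equals its utility at the mean
profile, and no player can gain by deviating from the mean profile. -/
theorem stmt_5 {ι : Type*} [Fintype ι] [Nonempty ι] [DecidableEq ι]
    (d : ι → ℕ)
    (S : ∀ i, Set (EuclideanSpace ℝ (Fin (d i))))
    (hSne : ∀ i, (S i).Nonempty)
    (hSconv : ∀ i, Convex ℝ (S i)) (hScomp : ∀ i, IsCompact (S i))
    (u : ι → (∀ i, EuclideanSpace ℝ (Fin (d i))) → ℝ)
    (hcont : ∀ i, Continuous (u i))
    (hconc : ConcaveOn ℝ (Set.univ.pi S) (fun a => ∑ i, u i a))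
    (hconv : ∀ (i : ι) (ai : EuclideanSpace ℝ (Fin (d i))),
      ConvexOn ℝ {b | b ∈ Set.univ.pi S ∧ b i = ai} (u i))
    (π : Measure (∀ i, EuclideanSpace ℝ (Fin (d i))))
    [IsProbabilityMeasure π]
    (hsupp : ∀ᵐ a ∂π, a ∈ Set.univ.pi S)
    (hCCE : ∀ (i : ι), ∀ ai' ∈ S i,
      (∫ a, u i (Function.update a i ai') ∂π) ≤ ∫ a, u i a ∂π)
    (abar : ∀ i, EuclideanSpace ℝ (Fin (d i)))
    (habar : abar = ∫ a, a ∂π) :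
    (∀ i, (∫ a, u i a ∂π) = u i abar) ∧
    (∀ (i : ι), ∀ ai' ∈ S i, u i (Function.update abar i ai') ≤ u i abar) := by
  classical
  set K := Set.univ.pi S with hKdef
  have hKcomp : IsCompact K := isCompact_univ_pi hScomp
  have hKconv : Convex ℝ K := convex_pi fun i _ => hSconv i
  have hKcl : IsClosed K := hKcomp.isClosed
  obtain ⟨C, hC⟩ : ∃ C, ∀ x ∈ K, ‖x‖ ≤ C := hKcomp.isBounded.exists_norm_le
  -- integrability of the identity
  have hid_int : Integrable (fun a => a) π := by
    refine Integrable.mono' (integrable_const C) continuous_id.aestronglyMeasurable ?_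
    filter_upwards [hsupp] with a ha using hC a ha
  -- bounds for utilities on K
  have hUbd : ∀ i, ∃ D, ∀ x ∈ K, ‖u i x‖ ≤ D := fun i =>
    hKcomp.exists_bound_of_continuousOn (hcont i).continuousOn
  have hu_int : ∀ i, Integrable (fun a => u i a) π := by
    intro i
    obtain ⟨D, hD⟩ := hUbd i
    refine Integrable.mono' (integrable_const D) (hcont i).aestronglyMeasurable ?_
    filter_upwards [hsupp] with a ha using hD a ha
  -- the update map and its properties
  have hupd_cont : ∀ (i : ι) (ai' : EuclideanSpace ℝ (Fin (d i))),
      Continuous (fun a : ∀ j, EuclideanSpace ℝ (Fin (d j)) => Function.update a i ai') := by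
    intro i ai'
    refine continuous_pi fun j => ?_
    by_cases h : j = i
    · subst h
      simpa only [Function.update_self] using continuous_const
    · simp only [Function.update_of_ne h]
      exact continuous_apply j
  have hupd_mem : ∀ (i : ι) (ai' : EuclideanSpace ℝ (Fin (d i))), ai' ∈ S i →
      ∀ a ∈ K, Function.update a i ai' ∈ K := by
    intro i ai' hai' a ha j _
    by_cases h : j = i
    · subst h; simpa only [Function.update_self] using hai'
    · simpa only [Function.update_of_ne h] using ha j trivial
  have hupd_int : ∀ (i : ι) (ai' : EuclideanSpace ℝ (Fin (d i))), ai' ∈ S i →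
      Integrable (fun a => Function.update a i ai') π := by
    intro i ai' hai'
    refine Integrable.mono' (integrable_const C) (hupd_cont i ai').aestronglyMeasurable ?_
    filter_upwards [hsupp] with a ha using hC _ (hupd_mem i ai' hai' a ha)
  have huupd_int : ∀ (i : ι) (ai' : EuclideanSpace ℝ (Fin (d i))), ai' ∈ S i →
      Integrable (fun a => u i (Function.update a i ai')) π := by
    intro i ai' hai'
    obtain ⟨D, hD⟩ := hUbd i
    refine Integrable.mono' (integrable_const D)
      ((hcont i).comp (hupd_cont i ai')).aestronglyMeasurable ?_
    filter_upwards [hsupp] with a ha using hD _ (hupd_mem i ai' hai' a ha)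
  -- abar is in K
  have habarK : abar ∈ K := by
    rw [habar]; exact hKconv.integral_mem hKcl hsupp hid_int
  -- mean of update is update of mean
  have hupd_mean : ∀ (i : ι) (ai' : EuclideanSpace ℝ (Fin (d i))), ai' ∈ S i →
      (∫ a, Function.update a i ai' ∂π) = Function.update abar i ai' := by
    intro i ai' hai'
    funext j
    have hproj := (ContinuousLinearMap.proj (R := ℝ)
      (φ := fun j => EuclideanSpace ℝ (Fin (d j))) j).integral_comp_comm
      (hupd_int i ai' hai')
    have hproj' := (ContinuousLinearMap.proj (R := ℝ)
      (φ := fun j => EuclideanSpace ℝ (Fin (d j))) j).integral_comp_comm hid_int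
    simp only [ContinuousLinearMap.proj_apply] at hproj hproj'
    by_cases h : j = i
    · subst h
      calc (∫ a, Function.update a j ai' ∂π) j
          = ∫ a, Function.update a j ai' j ∂π := hproj.symm
        _ = ∫ _a, ai' ∂π := by simp only [Function.update_self]
        _ = ai' := by simp
        _ = Function.update abar j ai' j := by rw [Function.update_self]
    · calc (∫ a, Function.update a i ai' ∂π) j
          = ∫ a, Function.update a i ai' j ∂π := hproj.symm
        _ = ∫ a, a j ∂π := by simp only [Function.update_of_ne h]
        _ = abar j := by rw [habar]; exact hproj'
        _ = Function.update abar i ai' j := by rw [Function.update_of_ne h]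
  -- Step A: Jensen for the convex functions
  have stepA : ∀ (i : ι), ∀ ai' ∈ S i,
      u i (Function.update abar i ai') ≤ ∫ a, u i (Function.update a i ai') ∂π := by
    intro i ai' hai'
    have hsetcl : IsClosed {b : ∀ j, EuclideanSpace ℝ (Fin (d j)) | b ∈ K ∧ b i = ai'} :=
      hKcl.inter (isClosed_eq (continuous_apply i) continuous_const)
    have hfs : ∀ᵐ a ∂π, Function.update a i ai' ∈
        {b : ∀ j, EuclideanSpace ℝ (Fin (d j)) | b ∈ K ∧ b i = ai'} := by
      filter_upwards [hsupp] with a ha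
      exact ⟨hupd_mem i ai' hai' a ha, Function.update_self i ai' a⟩
    have hJ := (hconv i ai').map_integral_le (hcont i).continuousOn hsetcl hfs
      (hupd_int i ai' hai') (huupd_int i ai' hai')
    rwa [hupd_mean i ai' hai'] at hJ
  -- Step B: u i abar ≤ ∫ u i
  have stepB : ∀ i, u i abar ≤ ∫ a, u i a ∂π := by
    intro i
    have h1 := stepA i (abar i) (habarK i trivial)
    rw [Function.update_eq_self] at h1
    exact h1.trans (hCCE i (abar i) (habarK i trivial))
  -- Step C: Jensen for the concave sum
  have stepC : (∑ i, ∫ a, u i a ∂π) ≤ ∑ i, u i abar := by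
    have hsum_int : Integrable (fun a => ∑ i, u i a) π :=
      integrable_finset_sum _ fun i _ => hu_int i
    have hJ := hconc.le_map_integral (continuous_finset_sum _ fun i _ =>
      hcont i).continuousOn hKcl hsupp hid_int hsum_int
    rw [integral_finset_sum _ (fun i _ => hu_int i)] at hJ
    rw [← habar] at hJ
    exact hJ
  have hsum_eq : (∑ i, u i abar) = ∑ i, ∫ a, u i a ∂π :=
    le_antisymm (Finset.sum_le_sum fun i _ => stepB i) stepC
  have heq : ∀ i, (∫ a, u i a ∂π) = u i abar := by
    intro i
    exact ((Finset.sum_eq_sum_iff_of_le fun i _ => stepB i).1 hsum_eq i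
      (Finset.mem_univ i)).symm
  refine ⟨heq, fun i ai' hai' => ?_⟩
  exact (stepA i ai' hai').trans ((hCCE i ai' hai').trans_eq (heq i))
end

section
/- Under the social concavity assumptions, for any coarse correlated equilibrium π with mean ā = E_π[a]: Σ_i E_π[u_i(a)] ≤ Σ_i u_i(ā) (by concavity of the welfare) and Σ_i E_π[u_i(a)] ≥ Σ_i u_i(ā) (combining the CCE property with convexity of each u_i in opponents' actions), hence Σ_i E_π[u_i(a)] = Σ_i u_i(ā). -/
open MeasureTheory

/-- For a CCE π with mean ā in a socially concave game:
Σ_i E_π[u_i] ≤ Σ_i u_i(ā) by concavity, Σ_i E_π[u_i] ≥ Σ_i u_i(ā) by the CCE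
property and convexity, hence equality. -/
theorem stmt_6 {ι : Type*} [Fintype ι] [Nonempty ι] [DecidableEq ι]
    (d : ι → ℕ)
    (S : ∀ i, Set (EuclideanSpace ℝ (Fin (d i))))
    (hSne : ∀ i, (S i).Nonempty)
    (hSconv : ∀ i, Convex ℝ (S i)) (hScomp : ∀ i, IsCompact (S i))
    (u : ι → (∀ i, EuclideanSpace ℝ (Fin (d i))) → ℝ)
    (hcont : ∀ i, Continuous (u i))
    (hconc : ConcaveOn ℝ (Set.univ.pi S) (fun a => ∑ i, u i a))
    (hconv : ∀ (i : ι) (ai : EuclideanSpace ℝ (Fin (d i))),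
      ConvexOn ℝ {b | b ∈ Set.univ.pi S ∧ b i = ai} (u i))
    (π : Measure (∀ i, EuclideanSpace ℝ (Fin (d i))))
    [IsProbabilityMeasure π]
    (hsupp : ∀ᵐ a ∂π, a ∈ Set.univ.pi S)
    (hCCE : ∀ (i : ι), ∀ ai' ∈ S i,
      (∫ a, u i (Function.update a i ai') ∂π) ≤ ∫ a, u i a ∂π)
    (abar : ∀ i, EuclideanSpace ℝ (Fin (d i)))
    (habar : abar = ∫ a, a ∂π) :
    ((∑ i, ∫ a, u i a ∂π) ≤ ∑ i, u i abar) ∧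
    ((∑ i, u i abar) ≤ ∑ i, ∫ a, u i a ∂π) ∧
    ((∑ i, ∫ a, u i a ∂π) = ∑ i, u i abar) := by
  set P : Set (∀ i, EuclideanSpace ℝ (Fin (d i))) := Set.univ.pi S with hP
  have hPcomp : IsCompact P := isCompact_univ_pi hScomp
  have hPclosed : IsClosed P := hPcomp.isClosed
  have hPconv : Convex ℝ P := convex_pi (fun i _ => hSconv i)
  -- bound on P
  obtain ⟨C, hC⟩ := hPcomp.exists_bound_of_continuousOn continuous_id.continuousOn
  -- integrability of identity
  have hid_meas : AEStronglyMeasurable (fun a : ∀ i, EuclideanSpace ℝ (Fin (d i)) => a) π :=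
    continuous_id.aestronglyMeasurable
  have hid_int : Integrable (fun a : ∀ i, EuclideanSpace ℝ (Fin (d i)) => a) π := by
    refine Integrable.mono' (integrable_const C) hid_meas ?_
    filter_upwards [hsupp] with a ha using hC a ha
  -- integrability of u i
  have hui_int : ∀ i, Integrable (fun a => u i a) π := by
    intro i
    obtain ⟨D, hD⟩ := hPcomp.exists_bound_of_continuousOn (hcont i).continuousOn
    refine Integrable.mono' (integrable_const D) (hcont i).aestronglyMeasurable ?_
    filter_upwards [hsupp] with a ha using hD a ha
  -- abar ∈ P
  have habarP : abar ∈ P := by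
    rw [habar]
    exact hPconv.integral_mem hPclosed hsupp hid_int
  have habarS : ∀ i, abar i ∈ S i := fun i => habarP i (Set.mem_univ i)
  -- coordinatewise formula for abar
  have habar_coord : ∀ j, abar j = ∫ a, a j ∂π := by
    intro j
    rw [habar]
    exact (ContinuousLinearMap.integral_comp_comm
      (ContinuousLinearMap.proj (R := ℝ)
        (φ := fun i => EuclideanSpace ℝ (Fin (d i))) j) hid_int).symm
  -- the update map
  have hupd_cont : ∀ i, Continuous
      (fun a : ∀ i, EuclideanSpace ℝ (Fin (d i)) => Function.update a i (abar i)) := by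
    intro i
    refine continuous_pi fun j => ?_
    rcases eq_or_ne j i with rfl | hj
    · simpa using continuous_const
    · simpa [Function.update_of_ne hj] using continuous_apply j
  have hupd_mem : ∀ i, ∀ a ∈ P, Function.update a i (abar i) ∈ P := by
    intro i a ha j _
    rcases eq_or_ne j i with rfl | hj
    · simpa using habarS j
    · simpa [Function.update_of_ne hj] using ha j (Set.mem_univ j)
  have hupd_int : ∀ i, Integrable
      (fun a => Function.update a i (abar i)) π := by
    intro i
    refine Integrable.mono' (integrable_const C) (hupd_cont i).aestronglyMeasurable ?_
    filter_upwards [hsupp] with a ha using hC _ (hupd_mem i a ha)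
  -- integral of update is abar
  have hupd_integral : ∀ i, (∫ a, Function.update a i (abar i) ∂π) = abar := by
    intro i
    funext j
    have := (ContinuousLinearMap.integral_comp_comm
      (ContinuousLinearMap.proj (R := ℝ)
        (φ := fun i => EuclideanSpace ℝ (Fin (d i))) j) (hupd_int i)).symm
    simp only [ContinuousLinearMap.proj_apply] at this
    rw [this]
    rcases eq_or_ne j i with rfl | hj
    · simp
    · simp only [Function.update_of_ne hj]
      exact (habar_coord j).symm
  -- integrability of u i ∘ update
  have hupd_ui_int : ∀ i, Integrable (fun a => u i (Function.update a i (abar i))) π := by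
    intro i
    obtain ⟨D, hD⟩ := hPcomp.exists_bound_of_continuousOn (hcont i).continuousOn
    refine Integrable.mono' (integrable_const D)
      ((hcont i).comp (hupd_cont i)).aestronglyMeasurable ?_
    filter_upwards [hsupp] with a ha using hD _ (hupd_mem i a ha)
  -- upper bound via concavity
  have hub : (∑ i, ∫ a, u i a ∂π) ≤ ∑ i, u i abar := by
    have hsum_int : Integrable (fun a => ∑ i, u i a) π := integrable_finset_sum _ fun i _ => hui_int i
    have := hconc.le_map_integral (continuous_finset_sum _ fun i _ => hcont i).continuousOn
      hPclosed hsupp hid_int (by simpa [Function.comp_def] using hsum_int)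
    rw [← habar] at this
    calc (∑ i, ∫ a, u i a ∂π) = ∫ a, ∑ i, u i a ∂π :=
          (integral_finset_sum _ fun i _ => hui_int i).symm
      _ ≤ ∑ i, u i abar := this
  -- lower bound via convexity and CCE
  have hlb : (∑ i, u i abar) ≤ ∑ i, ∫ a, u i a ∂π := by
    refine Finset.sum_le_sum fun i _ => ?_
    set s : Set (∀ i, EuclideanSpace ℝ (Fin (d i))) := {b | b ∈ P ∧ b i = abar i} with hs
    have hsclosed : IsClosed s := by
      have : s = P ∩ ((fun b => b i) ⁻¹' {abar i}) := by
        ext b; simp [hs, Set.mem_inter_iff]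
      rw [this]
      exact hPclosed.inter (isClosed_singleton.preimage (continuous_apply i))
    have hmem : ∀ᵐ a ∂π, Function.update a i (abar i) ∈ s := by
      filter_upwards [hsupp] with a ha
      exact ⟨hupd_mem i a ha, Function.update_self i (abar i) a⟩
    have hjen := (hconv i (abar i)).map_integral_le (hcont i).continuousOn hsclosed
      hmem (hupd_int i) (by simpa [Function.comp_def] using hupd_ui_int i)
    rw [hupd_integral i] at hjen
    exact hjen.trans (hCCE i (abar i) (habarS i))
  exact ⟨hub, hlb, le_antisymm hub hlb⟩
end

section
/- In a socially concave game, for a coarse correlated equilibrium π with mean ā, the CCE inequality together with convexity of u_i in opponents' actions implies E_π[u_i(a)] ≥ u_i(a'_i, ā_{-i}) for every player i and every a'_i ∈ A_i. -/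
open MeasureTheory

/-- In a socially concave game, for a CCE π with mean ā, the CCE inequality
together with convexity of u_i in opponents' actions (Jensen) gives
E_π[u_i(a)] ≥ u_i(a'_i, ā_{-i}) for every player i and every a'_i ∈ S i. -/
theorem stmt_7 {ι : Type*} [Fintype ι] [Nonempty ι] [DecidableEq ι]
    (d : ι → ℕ)
    (S : ∀ i, Set (EuclideanSpace ℝ (Fin (d i))))
    (hSne : ∀ i, (S i).Nonempty)
    (hSconv : ∀ i, Convex ℝ (S i)) (hScomp : ∀ i, IsCompact (S i))
    (u : ι → (∀ i, EuclideanSpace ℝ (Fin (d i))) → ℝ)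
    (hcont : ∀ i, Continuous (u i))
    (hconv : ∀ (i : ι) (ai : EuclideanSpace ℝ (Fin (d i))),
      ConvexOn ℝ {b | b ∈ Set.univ.pi S ∧ b i = ai} (u i))
    (π : Measure (∀ i, EuclideanSpace ℝ (Fin (d i))))
    [IsProbabilityMeasure π]
    (hsupp : ∀ᵐ a ∂π, a ∈ Set.univ.pi S)
    (hCCE : ∀ (i : ι), ∀ ai' ∈ S i,
      (∫ a, u i (Function.update a i ai') ∂π) ≤ ∫ a, u i a ∂π)
    (abar : ∀ i, EuclideanSpace ℝ (Fin (d i)))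
    (habar : abar = ∫ a, a ∂π) :
    ∀ (i : ι), ∀ ai' ∈ S i,
      u i (Function.update abar i ai') ≤ ∫ a, u i a ∂π := by
  intro i ai' hai'
  -- the compact product set and a norm bound
  have hKcomp : IsCompact (Set.univ.pi S) := isCompact_univ_pi hScomp
  obtain ⟨C, hC⟩ := hKcomp.isBounded.exists_norm_le
  -- the map a ↦ update a i ai' is continuous
  have hupd : Continuous (fun a : ∀ j, EuclideanSpace ℝ (Fin (d j)) =>
      Function.update a i ai') := continuous_id.update i continuous_const
  -- integrability of f := update · i ai'
  have hfmeas : AEStronglyMeasurable (fun a : ∀ j, EuclideanSpace ℝ (Fin (d j)) =>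
      Function.update a i ai') π := hupd.aestronglyMeasurable
  have hfs : ∀ᵐ a ∂π, Function.update a i ai' ∈
      {b : ∀ j, EuclideanSpace ℝ (Fin (d j)) | b ∈ Set.univ.pi S ∧ b i = ai'} := by
    filter_upwards [hsupp] with a ha
    refine ⟨fun j _ => ?_, Function.update_self i ai' a⟩
    rcases eq_or_ne j i with rfl | hj
    · simpa using hai'
    · rw [Function.update_of_ne hj]; exact ha j trivial
  have hidmem : ∀ᵐ a ∂π, a ∈ Set.univ.pi S := hsupp
  have hidInt : Integrable (fun a : ∀ j, EuclideanSpace ℝ (Fin (d j)) => a) π := by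
    refine ⟨aestronglyMeasurable_id, ?_⟩
    refine HasFiniteIntegral.of_bounded (C := C) ?_
    filter_upwards [hsupp] with a ha using hC a ha
  have hKcl : IsClosed (Set.univ.pi S) := hKcomp.isClosed
  have hTcl : IsClosed {b : ∀ j, EuclideanSpace ℝ (Fin (d j)) | b ∈ Set.univ.pi S ∧ b i = ai'} := by
    have : IsClosed {b : ∀ j, EuclideanSpace ℝ (Fin (d j)) | b i = ai'} :=
      isClosed_eq (continuous_apply i) continuous_const
    exact hKcl.inter this
  -- T is compact (closed subset of compact K), so u i is bounded on it
  have hTsub : {b : ∀ j, EuclideanSpace ℝ (Fin (d j)) | b ∈ Set.univ.pi S ∧ b i = ai'}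
      ⊆ Set.univ.pi S := fun b hb => hb.1
  have hfInt : Integrable (fun a : ∀ j, EuclideanSpace ℝ (Fin (d j)) =>
      Function.update a i ai') π := by
    refine ⟨hfmeas, ?_⟩
    obtain ⟨C', hC'⟩ := (hKcomp.image hupd).isBounded.exists_norm_le
    refine HasFiniteIntegral.of_bounded (C := C') ?_
    filter_upwards [hsupp] with a ha using hC' _ (Set.mem_image_of_mem _ ha)
  have hgfInt : Integrable ((u i) ∘ (fun a : ∀ j, EuclideanSpace ℝ (Fin (d j)) =>
      Function.update a i ai')) π := by
    refine ⟨((hcont i).comp hupd).aestronglyMeasurable, ?_⟩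
    obtain ⟨C'', hC''⟩ := ((hKcomp.image hupd).image (hcont i)).isBounded.exists_norm_le
    refine HasFiniteIntegral.of_bounded (C := C'') ?_
    filter_upwards [hsupp] with a ha using
      hC'' _ (Set.mem_image_of_mem _ (Set.mem_image_of_mem _ ha))
  -- Jensen
  have hjen := (hconv i ai').map_integral_le ((hcont i).continuousOn) hTcl hfs hfInt hgfInt
  -- compute the integral of the update map componentwise
  have hint : (∫ a, Function.update a i ai' ∂π) = Function.update abar i ai' := by
    funext j
    have hproj : ∀ (g : (∀ j, EuclideanSpace ℝ (Fin (d j))) → (∀ j, EuclideanSpace ℝ (Fin (d j)))),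
        Integrable g π → (∫ a, g a ∂π) j = ∫ a, g a j ∂π := by
      intro g hg
      exact ((ContinuousLinearMap.proj (R := ℝ)
        (φ := fun j => EuclideanSpace ℝ (Fin (d j))) j).integral_comp_comm hg).symm
    rcases eq_or_ne j i with rfl | hj
    · rw [hproj _ hfInt]
      simp [Function.update_self]
    · rw [Function.update_of_ne hj, hproj _ hfInt, habar, hproj _ hidInt]
      simp [Function.update_of_ne hj]
  rw [hint] at hjen
  exact hjen.trans (hCCE i ai' hai')
end
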